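/- In the setting of a generalised Morita context (A_i; M_ij; φ_ikj) of size n with A_t = R, a Morita context (R, S; N, L; ζ, θ), their composition (A′_i; M′_ij; φ′_ikj), the column-excision N_m and the row-excision L_m, the row-column ligation |α′| : L_m × N_m → [A′_i; M′_ij] is [A_i; M_ij]-balanced: |α′|(y·c, x) = |α′|(y, c·x) for all y ∈ L_m, x ∈ N_m and c ∈ [A_i; M_ij]. Consequently |α′| factors through an additive map L_m ⊗_{[A_i; M_ij]} N_m → [A′_i; M′_ij]. -/
import Mathlib


universe u

open MulOpposite

/-- A biadditive map `M × X → Z` which is balanced over the ring `A`,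
where `ra` is a right `A`-action on `M` and `la` is a left `A`-action on `X`. -/
def IsBalancedMap (A : Type u) [Ring A] {M X Z : Type u}
    [AddCommGroup M] [AddCommGroup X] [AddCommGroup Z]
    (ra : M → A → M) (la : A → X → X) (g : M → X → Z) : Prop :=
  (∀ m m' x, g (m + m') x = g m x + g m' x) ∧
  (∀ m x x', g m (x + x') = g m x + g m x') ∧
  (∀ (a : A) m x, g (ra m a) x = g m (la a x))

/-- `τ : M × X → T` exhibits `T` as the tensor product `M ⊗[A] X` of a right
`A`-module `M` and a left `A`-module `X`: `τ` is biadditive and `A`-balanced and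
every biadditive `A`-balanced map out of `M × X` factors uniquely through `τ`. -/
structure IsBTensor (A : Type u) [Ring A] {M X : Type u}
    [AddCommGroup M] [AddCommGroup X]
    (ra : M → A → M) (la : A → X → X)
    (T : Type u) [AddCommGroup T] (τ : M → X → T) : Prop where
  balanced : IsBalancedMap A ra la τ
  lift : ∀ (Z : Type u) [AddCommGroup Z] (g : M → X → Z),
    IsBalancedMap A ra la g → ∃! h : T →+ Z, ∀ m x, h (τ m x) = g m x

/-- Surjectivity of the additive map `M ⊗ X → Z` induced by `g : M × X → Z`. -/
def TensorSurj {M X Z : Type u} [AddCommGroup Z] (g : M → X → Z) : Prop :=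
  AddSubgroup.closure {z : Z | ∃ m x, z = g m x} = ⊤

/-- A (classical) Morita context `(R, S; N, L; ζ, θ)`: `N` is an `R`–`S`-bimodule,
`L` is an `S`–`R`-bimodule, and `zeta : N ⊗[S] L → R`, `theta : L ⊗[R] N → S` are
bimodule homomorphisms (recorded here as balanced biadditive bilinear maps)
satisfying the mixed associativity conditions. -/
structure MoritaCtx (R S N L : Type u) [Ring R] [Ring S]
    [AddCommGroup N] [AddCommGroup L]
    [Module R N] [Module Sᵐᵒᵖ N] [SMulCommClass R Sᵐᵒᵖ N]
    [Module S L] [Module Rᵐᵒᵖ L] [SMulCommClass S Rᵐᵒᵖ L] where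
  zeta : N → L → R
  theta : L → N → S
  zeta_add_left : ∀ n n' l, zeta (n + n') l = zeta n l + zeta n' l
  zeta_add_right : ∀ n l l', zeta n (l + l') = zeta n l + zeta n l'
  zeta_balanced : ∀ (s : S) n l, zeta (op s • n) l = zeta n (s • l)
  zeta_left : ∀ (r : R) n l, zeta (r • n) l = r * zeta n l
  zeta_right : ∀ (r : R) n l, zeta n (op r • l) = zeta n l * r
  theta_add_left : ∀ l l' n, theta (l + l') n = theta l n + theta l' n
  theta_add_right : ∀ l n n', theta l (n + n') = theta l n + theta l n'
  theta_balanced : ∀ (r : R) l n, theta (op r • l) n = theta l (r • n)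
  theta_left : ∀ (s : S) l n, theta (s • l) n = s * theta l n
  theta_right : ∀ (s : S) l n, theta l (op s • n) = theta l n * s
  assoc_left : ∀ n l n', zeta n l • n' = op (theta l n') • n
  assoc_right : ∀ l n l', theta l n • l' = op (zeta n l') • l

/-- A generalised Morita context `(A_i; M_ij; φ_ikj)` of size `n`:
rings `A i`, `A_i`–`A_j`-bimodules `M i j` with `M i i` identified with the
regular bimodule `A i` via the additive isomorphisms `δ i`, and bimodule
homomorphisms `φ i k j : M i k ⊗[A k] M k j → M i j` (recorded as balanced
biadditive bilinear maps) which restrict to the action/multiplication maps on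
diagonal indices and satisfy the mixed associativity conditions. -/
structure GenMoritaCtx (n : ℕ) (A : Fin n → Type u) (M : Fin n → Fin n → Type u)
    [∀ i, Ring (A i)] [∀ i j, AddCommGroup (M i j)]
    [∀ i j, Module (A i) (M i j)] [∀ i j, Module ((A j)ᵐᵒᵖ) (M i j)]
    [∀ i j, SMulCommClass (A i) ((A j)ᵐᵒᵖ) (M i j)] where
  φ : ∀ i k j, M i k → M k j → M i j
  δ : ∀ i, A i ≃+ M i i
  φ_add_left : ∀ i k j (x x' : M i k) (y : M k j), φ i k j (x + x') y = φ i k j x y + φ i k j x' y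
  φ_add_right : ∀ i k j (x : M i k) (y y' : M k j), φ i k j x (y + y') = φ i k j x y + φ i k j x y'
  φ_balanced : ∀ i k j (a : A k) (x : M i k) (y : M k j), φ i k j (op a • x) y = φ i k j x (a • y)
  φ_smul_left : ∀ i k j (a : A i) (x : M i k) (y : M k j), φ i k j (a • x) y = a • φ i k j x y
  φ_smul_right : ∀ i k j (a : A j) (x : M i k) (y : M k j), φ i k j x (op a • y) = op a • φ i k j x y
  δ_mul_left : ∀ i (a b : A i), δ i (a * b) = a • δ i b
  δ_mul_right : ∀ i (a b : A i), δ i (a * b) = op b • δ i a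
  φ_diag_left : ∀ k j (a : A k) (y : M k j), φ k k j (δ k a) y = a • y
  φ_diag_right : ∀ i k (a : A k) (x : M i k), φ i k k x (δ k a) = op a • x
  φ_assoc : ∀ i h k j (x : M i h) (y : M h k) (z : M k j),
    φ i h j x (φ h k j y z) = φ i k j (φ i h k x y) z

variable {n : ℕ} {A : Fin n → Type u} {M : Fin n → Fin n → Type u}
    [∀ i, Ring (A i)] [∀ i j, AddCommGroup (M i j)]
    [∀ i j, Module (A i) (M i j)] [∀ i j, Module ((A j)ᵐᵒᵖ) (M i j)]
    [∀ i j, SMulCommClass (A i) ((A j)ᵐᵒᵖ) (M i j)]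

/-- The matrix multiplication `(x·y)_{ij} = ∑ k, φ_ikj (x_ik ⊗ y_kj)` on `⊕_{i,j} M i j`. -/
def matMul (ctx : GenMoritaCtx n A M) (x y : ∀ i j, M i j) : ∀ i j, M i j :=
  fun i j => ∑ k, ctx.φ i k j (x i k) (y k j)

/-- The identity matrix: `1_{A_i}` on the diagonal and `0` elsewhere. -/
def matOne (ctx : GenMoritaCtx n A M) : ∀ i j, M i j :=
  fun i j => if h : i = j then cast (congrArg (M i) h) (ctx.δ i 1) else 0

/-- `ε : Λ ≃ ⊕_{i,j} M i j` exhibits the ring `Λ` as the generalised matrix ring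
`[A_i; M_ij]` of the generalised Morita context `ctx`. -/
structure IsMatrixRing (ctx : GenMoritaCtx n A M) (Λ : Type u) [Ring Λ]
    (ε : Λ → ∀ i j, M i j) : Prop where
  bijective : Function.Bijective ε
  map_add : ∀ x y, ε (x + y) = ε x + ε y
  map_mul : ∀ x y, ε (x * y) = matMul ctx (ε x) (ε y)
  map_one : ε 1 = matOne ctx

/-- The scalar multiplication of an explicitly given module structure. -/
def msmul {Λ X : Type u} [Ring Λ] [AddCommGroup X] (inst : Module Λ X) (c : Λ) (x : X) : X :=
  letI := inst; c • x

section Composition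

variable (t : Fin n) (S N L : Type u) [Ring S]
  [AddCommGroup N] [AddCommGroup L]
  [Module (A t) N] [Module Sᵐᵒᵖ N] [SMulCommClass (A t) Sᵐᵒᵖ N]
  [Module S L] [Module ((A t)ᵐᵒᵖ) L] [SMulCommClass S ((A t)ᵐᵒᵖ) L]
  (A' : Fin n → Type u) (M' : Fin n → Fin n → Type u)
  [∀ i, Ring (A' i)] [∀ i j, AddCommGroup (M' i j)]
  [∀ i j, Module (A' i) (M' i j)] [∀ i j, Module ((A' j)ᵐᵒᵖ) (M' i j)]
  [∀ i j, SMulCommClass (A' i) ((A' j)ᵐᵒᵖ) (M' i j)]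

variable (A M)

/-- Data identifying the family `A'`, `M'` with the constituents of the composition
of a generalised Morita context `(A_i; M_ij; φ_ikj)` (with `A t = R`) with a Morita
context `(R, S; N, L; ζ, θ)`:  `A' t = S`, `A' i = A i` for `i ≠ t`, `M' t t = S`,
`M' i t = M i t ⊗[R] N` for `i ≠ t`, `M' t j = L ⊗[R] M t j` for `j ≠ t` and
`M' i j = M i j` for `i, j ≠ t`, where the tensor products are abstract tensor
products (universal property) and the identifications are compatible with all the
actions involved. -/
structure CompSetup : Type u where
  ρ : ∀ i, i ≠ t → (A' i ≃+* A i)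
  ρt : A' t ≃+* S
  ee : ∀ i j, i ≠ t → j ≠ t → (M i j ≃+ M' i j)
  tmulN : ∀ i, i ≠ t → (M i t → N → M' i t)
  tmulL : ∀ j, j ≠ t → (L → M t j → M' t j)
  uS : S ≃+ M' t t
  tmulN_tensor : ∀ i (hi : i ≠ t),
    IsBTensor (A t) (fun (m : M i t) a => op a • m) (fun a (x : N) => a • x)
      (M' i t) (tmulN i hi)
  tmulL_tensor : ∀ j (hj : j ≠ t),
    IsBTensor (A t) (fun (l : L) a => op a • l) (fun a (x : M t j) => a • x)
      (M' t j) (tmulL j hj)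
  ee_smul_left : ∀ i j (hi : i ≠ t) (hj : j ≠ t) (a' : A' i) (x : M i j),
    a' • ee i j hi hj x = ee i j hi hj (ρ i hi a' • x)
  ee_smul_right : ∀ i j (hi : i ≠ t) (hj : j ≠ t) (b' : A' j) (x : M i j),
    op b' • ee i j hi hj x = ee i j hi hj (op (ρ j hj b') • x)
  tmulN_smul_left : ∀ i (hi : i ≠ t) (a' : A' i) (m : M i t) (x : N),
    a' • tmulN i hi m x = tmulN i hi (ρ i hi a' • m) x
  tmulN_smul_right : ∀ i (hi : i ≠ t) (s' : A' t) (m : M i t) (x : N),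
    op s' • tmulN i hi m x = tmulN i hi m (op (ρt s') • x)
  tmulL_smul_left : ∀ j (hj : j ≠ t) (s' : A' t) (l : L) (m : M t j),
    s' • tmulL j hj l m = tmulL j hj (ρt s' • l) m
  tmulL_smul_right : ∀ j (hj : j ≠ t) (b' : A' j) (l : L) (m : M t j),
    op b' • tmulL j hj l m = tmulL j hj l (op (ρ j hj b') • m)
  uS_smul_left : ∀ (s' : A' t) (s : S), s' • uS s = uS (ρt s' * s)
  uS_smul_right : ∀ (s' : A' t) (s : S), op s' • uS s = uS (s * ρt s')

/-- `ctx'` is the composition of the generalised Morita context `ctx` (with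
`A t = R`) with the Morita context `mc = (R, S; N, L; ζ, θ)`: its identity
identifications are the given ones and its structure maps `φ'` are given by the
eight defining formulas of the composition (Definition 3.1 of the paper), stated
on pure tensors through the identifications of `cs`. -/
structure IsComposition (ctx : GenMoritaCtx n A M) (mc : MoritaCtx (A t) S N L)
    (cs : CompSetup A M t S N L A' M') (ctx' : GenMoritaCtx n A' M') : Prop where
  delta_spec : ∀ i (hi : i ≠ t) (a' : A' i),
    ctx'.δ i a' = cs.ee i i hi hi (ctx.δ i (cs.ρ i hi a'))
  delta_t_spec : ∀ s' : A' t, ctx'.δ t s' = cs.uS (cs.ρt s')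
  phi_ttt : ∀ s s' : S, ctx'.φ t t t (cs.uS s) (cs.uS s') = cs.uS (s * s')
  phi_itt : ∀ i (hi : i ≠ t) (m : M i t) (x : N) (s : S),
    ctx'.φ i t t (cs.tmulN i hi m x) (cs.uS s) = cs.tmulN i hi m (op s • x)
  phi_ttj : ∀ j (hj : j ≠ t) (s : S) (l : L) (m : M t j),
    ctx'.φ t t j (cs.uS s) (cs.tmulL j hj l m) = cs.tmulL j hj (s • l) m
  phi_tkt : ∀ k (hk : k ≠ t) (l : L) (m : M t k) (m' : M k t) (x : N),
    ctx'.φ t k t (cs.tmulL k hk l m) (cs.tmulN k hk m' x)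
      = cs.uS (mc.theta (op ((ctx.δ t).symm (ctx.φ t k t m m')) • l) x)
  phi_ikt : ∀ i k (hi : i ≠ t) (hk : k ≠ t) (z : M i k) (m : M k t) (x : N),
    ctx'.φ i k t (cs.ee i k hi hk z) (cs.tmulN k hk m x)
      = cs.tmulN i hi (ctx.φ i k t z m) x
  phi_tkj : ∀ k j (hk : k ≠ t) (hj : j ≠ t) (l : L) (m : M t k) (y : M k j),
    ctx'.φ t k j (cs.tmulL k hk l m) (cs.ee k j hk hj y)
      = cs.tmulL j hj l (ctx.φ t k j m y)
  phi_itj : ∀ i j (hi : i ≠ t) (hj : j ≠ t) (m : M i t) (x : N) (l : L) (m' : M t j),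
    ctx'.φ i t j (cs.tmulN i hi m x) (cs.tmulL j hj l m')
      = cs.ee i j hi hj (ctx.φ i t j (op (mc.zeta x l) • m) m')
  phi_ikj : ∀ i k j (hi : i ≠ t) (hk : k ≠ t) (hj : j ≠ t) (z : M i k) (y : M k j),
    ctx'.φ i k j (cs.ee i k hi hk z) (cs.ee k j hk hj y)
      = cs.ee i j hi hj (ctx.φ i k j z y)

end Composition

section Excision

variable (t : Fin n) (S N L : Type u) [Ring S]
  [AddCommGroup N] [AddCommGroup L]
  [Module (A t) N] [Module Sᵐᵒᵖ N] [SMulCommClass (A t) Sᵐᵒᵖ N]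
  [Module S L] [Module ((A t)ᵐᵒᵖ) L] [SMulCommClass S ((A t)ᵐᵒᵖ) L]
  (A' : Fin n → Type u) (M' : Fin n → Fin n → Type u)
  [∀ i, Ring (A' i)] [∀ i j, AddCommGroup (M' i j)]
  [∀ i j, Module (A' i) (M' i j)] [∀ i j, Module ((A' j)ᵐᵒᵖ) (M' i j)]
  [∀ i j, SMulCommClass (A' i) ((A' j)ᵐᵒᵖ) (M' i j)]
  (NN : Fin n → Fin n → Type u) [∀ i j, AddCommGroup (NN i j)]
  (LL : Fin n → Fin n → Type u) [∀ i j, AddCommGroup (LL i j)]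

variable (A M)

/-- Data identifying the family `NN` with the column-excision: `NN i j = M i j`
for `j ≠ t` and `NN i t = M i t ⊗[R] N` (an abstract tensor product) for all `i`
(in particular `NN t t = (M t t) ⊗[R] N`, i.e. `R ⊗[R] N`). -/
structure ColExc where
  en : ∀ i j, j ≠ t → (M i j ≃+ NN i j)
  π : ∀ i, M i t → N → NN i t
  π_tensor : ∀ i,
    IsBTensor (A t) (fun (m : M i t) a => op a • m) (fun a (x : N) => a • x)
      (NN i t) (π i)

/-- Data identifying the family `LL` with the row-excision: `LL i j = M i j`
for `i ≠ t` and `LL t j = L ⊗[R] M t j` (an abstract tensor product) for all `j`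
(in particular `LL t t = L ⊗[R] (M t t)`, i.e. `L ⊗[R] R`). -/
structure RowExc where
  el : ∀ i j, i ≠ t → (M i j ≃+ LL i j)
  lp : ∀ j, L → M t j → LL t j
  lp_tensor : ∀ j,
    IsBTensor (A t) (fun (l : L) a => op a • l) (fun a (x : M t j) => a • x)
      (LL t j) (lp j)

/-- The component maps `β_ikj` of the left action of the generalised matrix ring
`[A_i; M_ij]` on the column-excision: `β_ikj = φ_ikj` for `j ≠ t` and
`β_ikt = φ_ikt ⊗ 1_N` for `j = t`, stated on pure tensors. -/
structure ColExcLeft (ctx : GenMoritaCtx n A M) (ce : ColExc A M t N NN)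
    (β : ∀ i k j, M i k → NN k j → NN i j) : Prop where
  add_left : ∀ i k j (x x' : M i k) (y : NN k j),
    β i k j (x + x') y = β i k j x y + β i k j x' y
  add_right : ∀ i k j (x : M i k) (y y' : NN k j),
    β i k j x (y + y') = β i k j x y + β i k j x y'
  spec_ne : ∀ i k j (hj : j ≠ t) (x : M i k) (y : M k j),
    β i k j x (ce.en k j hj y) = ce.en i j hj (ctx.φ i k j x y)
  spec_t : ∀ i k (z : M i k) (m : M k t) (x : N),
    β i k t z (ce.π k m x) = ce.π i (ctx.φ i k t z m) x

/-- The component maps `β'_ikj` of the right action of the generalised matrix ring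
`[A'_i; M'_ij]` of the composition on the column-excision, stated on pure tensors
through the identifications: `β'_ikj = φ'_ikj` for `i ≠ t`, and on row `t`:
`β'_ttt(r ⊗ n ⊗ s) = r ⊗ (n·s)`, `β'_ttj(r ⊗ n ⊗ l ⊗ m) = (r·ζ(n ⊗ l))·m` for
`j ≠ t`, `β'_tht = φ_tht ⊗ 1_N` for `h ≠ t` and `β'_thj = φ_thj` for `h, j ≠ t`. -/
structure ColExcRight (ctx : GenMoritaCtx n A M) (mc : MoritaCtx (A t) S N L)
    (cs : CompSetup A M t S N L A' M') (ce : ColExc A M t N NN)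
    (β' : ∀ i k j, NN i k → M' k j → NN i j) : Prop where
  add_left : ∀ i k j (x x' : NN i k) (y : M' k j),
    β' i k j (x + x') y = β' i k j x y + β' i k j x' y
  add_right : ∀ i k j (x : NN i k) (y y' : M' k j),
    β' i k j x (y + y') = β' i k j x y + β' i k j x y'
  spec₁ : ∀ i k j (hk : k ≠ t) (hj : j ≠ t) (x : M i k) (y : M k j),
    β' i k j (ce.en i k hk x) (cs.ee k j hk hj y) = ce.en i j hj (ctx.φ i k j x y)
  spec₂ : ∀ i k (hk : k ≠ t) (x : M i k) (m : M k t) (nn : N),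
    β' i k t (ce.en i k hk x) (cs.tmulN k hk m nn) = ce.π i (ctx.φ i k t x m) nn
  spec₃ : ∀ i j (hj : j ≠ t) (m : M i t) (nn : N) (l : L) (m' : M t j),
    β' i t j (ce.π i m nn) (cs.tmulL j hj l m')
      = ce.en i j hj (ctx.φ i t j (op (mc.zeta nn l) • m) m')
  spec₄ : ∀ i (m : M i t) (nn : N) (s : S),
    β' i t t (ce.π i m nn) (cs.uS s) = ce.π i m (op s • nn)

/-- The component maps `γ'_ikj` of the left action of `[A'_i; M'_ij]` on the
row-excision, stated on pure tensors through the identifications: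
`γ'_ikj = φ'_ikj` for `j ≠ t`, and on column `t`: `γ'_ttt(s ⊗ l ⊗ r) = (s·l) ⊗ r`,
`γ'_tkt = 1_L ⊗ φ_tkt` for `k ≠ t`, `γ'_itt(m ⊗ n ⊗ l ⊗ r) = m·(ζ(n ⊗ l)·r)` for
`i ≠ t` and `γ'_ikt = φ_ikt` for `i, k ≠ t`. -/
structure RowExcLeft (ctx : GenMoritaCtx n A M) (mc : MoritaCtx (A t) S N L)
    (cs : CompSetup A M t S N L A' M') (re : RowExc A M t L LL)
    (γ' : ∀ i k j, M' i k → LL k j → LL i j) : Prop where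
  add_left : ∀ i k j (x x' : M' i k) (y : LL k j),
    γ' i k j (x + x') y = γ' i k j x y + γ' i k j x' y
  add_right : ∀ i k j (x : M' i k) (y y' : LL k j),
    γ' i k j x (y + y') = γ' i k j x y + γ' i k j x y'
  spec₁ : ∀ i k j (hi : i ≠ t) (hk : k ≠ t) (x : M i k) (y : M k j),
    γ' i k j (cs.ee i k hi hk x) (re.el k j hk y) = re.el i j hi (ctx.φ i k j x y)
  spec₂ : ∀ k j (hk : k ≠ t) (l : L) (m : M t k) (y : M k j),
    γ' t k j (cs.tmulL k hk l m) (re.el k j hk y) = re.lp j l (ctx.φ t k j m y)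
  spec₃ : ∀ i j (hi : i ≠ t) (m : M i t) (nn : N) (l : L) (m' : M t j),
    γ' i t j (cs.tmulN i hi m nn) (re.lp j l m')
      = re.el i j hi (ctx.φ i t j (op (mc.zeta nn l) • m) m')
  spec₄ : ∀ j (s : S) (l : L) (m : M t j),
    γ' t t j (cs.uS s) (re.lp j l m) = re.lp j (s • l) m

/-- The component maps `γ_ikj` of the right action of `[A_i; M_ij]` on the
row-excision: `γ_ikj = φ_ikj` for `i ≠ t` and `γ_tkj = 1_L ⊗ φ_tkj` on row `t`,
stated on pure tensors. -/
structure RowExcRight (ctx : GenMoritaCtx n A M) (re : RowExc A M t L LL)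
    (γ : ∀ i k j, LL i k → M k j → LL i j) : Prop where
  add_left : ∀ i k j (x x' : LL i k) (y : M k j),
    γ i k j (x + x') y = γ i k j x y + γ i k j x' y
  add_right : ∀ i k j (x : LL i k) (y y' : M k j),
    γ i k j x (y + y') = γ i k j x y + γ i k j x y'
  spec_ne : ∀ i k j (hi : i ≠ t) (x : M i k) (y : M k j),
    γ i k j (re.el i k hi x) y = re.el i j hi (ctx.φ i k j x y)
  spec_t : ∀ k j (l : L) (m : M t k) (y : M k j),
    γ t k j (re.lp k l m) y = re.lp j l (ctx.φ t k j m y)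

/-- The component maps `α_ikj : N_ik ⊗ L_kj → M_ij` of the column-row ligation:
`α_ikj = φ_ikj` for `k ≠ t` and
`α_itj(m ⊗ n ⊗ l ⊗ m') = φ_itj((m·ζ(n ⊗ l)) ⊗ m')` for `k = t`,
stated on pure tensors. -/
structure ColRowLigation (ctx : GenMoritaCtx n A M) (mc : MoritaCtx (A t) S N L)
    (ce : ColExc A M t N NN) (re : RowExc A M t L LL)
    (α : ∀ i k j, NN i k → LL k j → M i j) : Prop where
  add_left : ∀ i k j (x x' : NN i k) (y : LL k j),
    α i k j (x + x') y = α i k j x y + α i k j x' y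
  add_right : ∀ i k j (x : NN i k) (y y' : LL k j),
    α i k j x (y + y') = α i k j x y + α i k j x y'
  spec_ne : ∀ i k j (hk : k ≠ t) (x : M i k) (y : M k j),
    α i k j (ce.en i k hk x) (re.el k j hk y) = ctx.φ i k j x y
  spec_t : ∀ i j (m : M i t) (nn : N) (l : L) (m' : M t j),
    α i t j (ce.π i m nn) (re.lp j l m') = ctx.φ i t j (op (mc.zeta nn l) • m) m'

/-- The component maps `α'_ikj : L_ik ⊗ N_kj → M'_ij` of the row-column ligation:
`α'_ikj = φ_ikj` for `i, j ≠ t`, `α'_ikt = φ_ikt ⊗ 1_N` for `i ≠ t = j`,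
`α'_tkj = 1_L ⊗ φ_tkj` for `i = t ≠ j` and
`α'_tkt(l ⊗ m ⊗ m' ⊗ n) = θ((l·φ_tkt(m ⊗ m')) ⊗ n)` for `i = t = j`,
stated on pure tensors through the identifications. -/
structure RowColLigation (ctx : GenMoritaCtx n A M) (mc : MoritaCtx (A t) S N L)
    (cs : CompSetup A M t S N L A' M') (ce : ColExc A M t N NN)
    (re : RowExc A M t L LL)
    (α' : ∀ i k j, LL i k → NN k j → M' i j) : Prop where
  add_left : ∀ i k j (x x' : LL i k) (y : NN k j),
    α' i k j (x + x') y = α' i k j x y + α' i k j x' y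
  add_right : ∀ i k j (x : LL i k) (y y' : NN k j),
    α' i k j x (y + y') = α' i k j x y + α' i k j x y'
  spec₁ : ∀ i k j (hi : i ≠ t) (hj : j ≠ t) (x : M i k) (y : M k j),
    α' i k j (re.el i k hi x) (ce.en k j hj y) = cs.ee i j hi hj (ctx.φ i k j x y)
  spec₂ : ∀ i k (hi : i ≠ t) (x : M i k) (m : M k t) (nn : N),
    α' i k t (re.el i k hi x) (ce.π k m nn) = cs.tmulN i hi (ctx.φ i k t x m) nn
  spec₃ : ∀ k j (hj : j ≠ t) (l : L) (m : M t k) (y : M k j),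
    α' t k j (re.lp k l m) (ce.en k j hj y) = cs.tmulL j hj l (ctx.φ t k j m y)
  spec₄ : ∀ k (l : L) (m : M t k) (m' : M k t) (nn : N),
    α' t k t (re.lp k l m) (ce.π k m' nn)
      = cs.uS (mc.theta (op ((ctx.δ t).symm (ctx.φ t k t m m')) • l) nn)

end Excision

/-- Every element of an abstract tensor product lies in the additive closure of
the pure tensors. -/
lemma IsBTensor.gen {A : Type u} [Ring A] {M X : Type u}
    [AddCommGroup M] [AddCommGroup X]
    {ra : M → A → M} {la : A → X → X} {T : Type u} [AddCommGroup T] {τ : M → X → T}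
    (h : IsBTensor A ra la T τ) (z : T) :
    z ∈ AddSubgroup.closure {z : T | ∃ m x, z = τ m x} := by
  set G := AddSubgroup.closure {z : T | ∃ m x, z = τ m x} with hG
  have hmem : ∀ m x, τ m x ∈ G := fun m x => AddSubgroup.subset_closure ⟨m, x, rfl⟩
  obtain ⟨f, hf, huniq⟩ := h.lift (T ⧸ G) (fun _ _ => (0 : T ⧸ G))
    ⟨fun _ _ _ => (add_zero 0).symm, fun _ _ _ => (add_zero 0).symm, fun _ _ _ => rfl⟩
  have h1 : QuotientAddGroup.mk' G = f :=
    huniq _ (fun m x => (QuotientAddGroup.eq_zero_iff _).mpr (hmem m x))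
  have h2 : (0 : T →+ T ⧸ G) = f := huniq _ (fun m x => rfl)
  have hz : QuotientAddGroup.mk' G z = 0 := by rw [h1, ← h2]; rfl
  exact (QuotientAddGroup.eq_zero_iff _).mp hz

/-- Two additive maps out of an abstract tensor product agreeing on pure tensors
agree everywhere. -/
lemma IsBTensor.homExt {A : Type u} [Ring A] {M X : Type u}
    [AddCommGroup M] [AddCommGroup X]
    {ra : M → A → M} {la : A → X → X} {T : Type u} [AddCommGroup T] {τ : M → X → T}
    (h : IsBTensor A ra la T τ) {Z : Type u} [AddCommGroup Z]
    (f g : T →+ Z) (hfg : ∀ m x, f (τ m x) = g (τ m x)) (z : T) : f z = g z := by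
  refine AddSubgroup.closure_induction (p := fun w _ => f w = g w)
    (fun w hw => ?_) (by simp) (fun a b _ _ ha hb => by simp [ha, hb])
    (fun a _ ha => by simp [ha]) (h.gen z)
  obtain ⟨m, x, rfl⟩ := hw
  exact hfg m x

/-- the row-column ligation `|α'| : L_m × N_m → [A'_i; M'_ij]` is
`[A_i; M_ij]`-balanced, i.e. `|α'|(y·c, x) = |α'|(y, c·x)`; consequently it
factors through an additive map `L_m ⊗_{[A_i; M_ij]} N_m → [A'_i; M'_ij]`. -/

theorem stmt9 {n : ℕ} {A : Fin n → Type u} {M : Fin n → Fin n → Type u}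
    [∀ i, Ring (A i)] [∀ i j, AddCommGroup (M i j)]
    [∀ i j, Module (A i) (M i j)] [∀ i j, Module ((A j)ᵐᵒᵖ) (M i j)]
    [∀ i j, SMulCommClass (A i) ((A j)ᵐᵒᵖ) (M i j)]
    (ctx : GenMoritaCtx n A M) (t : Fin n)
    (S N L : Type u) [Ring S] [AddCommGroup N] [AddCommGroup L]
    [Module (A t) N] [Module Sᵐᵒᵖ N] [SMulCommClass (A t) Sᵐᵒᵖ N]
    [Module S L] [Module ((A t)ᵐᵒᵖ) L] [SMulCommClass S ((A t)ᵐᵒᵖ) L]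
    (mc : MoritaCtx (A t) S N L)
    (A' : Fin n → Type u) (M' : Fin n → Fin n → Type u)
    [∀ i, Ring (A' i)] [∀ i j, AddCommGroup (M' i j)]
    [∀ i j, Module (A' i) (M' i j)] [∀ i j, Module ((A' j)ᵐᵒᵖ) (M' i j)]
    [∀ i j, SMulCommClass (A' i) ((A' j)ᵐᵒᵖ) (M' i j)]
    (cs : CompSetup A M t S N L A' M')
    (ctx' : GenMoritaCtx n A' M')
    (hcomp : IsComposition A M t S N L A' M' ctx mc cs ctx')
    (Λ : Type u) [Ring Λ] (εΛ : Λ → ∀ i j, M i j) (hΛ : IsMatrixRing ctx Λ εΛ)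
    (Λ' : Type u) [Ring Λ'] (εΛ' : Λ' → ∀ i j, M' i j) (hΛ' : IsMatrixRing ctx' Λ' εΛ')
    (NN : Fin n → Fin n → Type u) [∀ i j, AddCommGroup (NN i j)]
    (ce : ColExc A M t N NN)
    (LL : Fin n → Fin n → Type u) [∀ i j, AddCommGroup (LL i j)]
    (re : RowExc A M t L LL)
    -- the [A_i; M_ij]–[A'_i; M'_ij]-bimodule structure on the column-excision N_m
    [Module Λ (∀ i j, NN i j)] [Module Λ'ᵐᵒᵖ (∀ i j, NN i j)]
    [SMulCommClass Λ Λ'ᵐᵒᵖ (∀ i j, NN i j)]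
    (β : ∀ i k j, M i k → NN k j → NN i j)
    (hβ : ColExcLeft A M t N NN ctx ce β)
    (β' : ∀ i k j, NN i k → M' k j → NN i j)
    (hβ' : ColExcRight A M t S N L A' M' NN ctx mc cs ce β')
    (hNsmulL : ∀ (c : Λ) (x : ∀ i j, NN i j) (i j : Fin n),
      (c • x) i j = ∑ k, β i k j (εΛ c i k) (x k j))
    (hNsmulR : ∀ (c' : Λ') (x : ∀ i j, NN i j) (i j : Fin n),
      (op c' • x) i j = ∑ k, β' i k j (x i k) (εΛ' c' k j))
    -- the [A'_i; M'_ij]–[A_i; M_ij]-bimodule structure on the row-excision L_m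
    [Module Λ' (∀ i j, LL i j)] [Module Λᵐᵒᵖ (∀ i j, LL i j)]
    [SMulCommClass Λ' Λᵐᵒᵖ (∀ i j, LL i j)]
    (γ' : ∀ i k j, M' i k → LL k j → LL i j)
    (hγ' : RowExcLeft A M t S N L A' M' LL ctx mc cs re γ')
    (γ : ∀ i k j, LL i k → M k j → LL i j)
    (hγ : RowExcRight A M t L LL ctx re γ)
    (hLsmulL : ∀ (c' : Λ') (y : ∀ i j, LL i j) (i j : Fin n),
      (c' • y) i j = ∑ k, γ' i k j (εΛ' c' i k) (y k j))
    (hLsmulR : ∀ (c : Λ) (y : ∀ i j, LL i j) (i j : Fin n),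
      (op c • y) i j = ∑ k, γ i k j (y i k) (εΛ c k j))
    -- the row-column ligation and the map |α'| it induces into Λ' = [A'_i; M'_ij]
    (α' : ∀ i k j, LL i k → NN k j → M' i j)
    (hα' : RowColLigation A M t S N L A' M' NN LL ctx mc cs ce re α')
    (Abar' : (∀ i j, LL i j) → (∀ i j, NN i j) → Λ')
    (hAbar' : ∀ y x, εΛ' (Abar' y x) = fun i j => ∑ k, α' i k j (y i k) (x k j)) :
    (∀ (y : ∀ i j, LL i j) (x : ∀ i j, NN i j) (c : Λ),
      Abar' (op c • y) x = Abar' y (c • x)) ∧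
    (∀ (T : Type u) [AddCommGroup T]
        (τT : (∀ i j, LL i j) → (∀ i j, NN i j) → T),
      IsBTensor Λ (fun (y : ∀ i j, LL i j) (c : Λ) => op c • y)
          (fun (c : Λ) (x : ∀ i j, NN i j) => c • x) T τT →
      ∃ g : T →+ Λ', ∀ y x, g (τT y x) = Abar' y x) := by
  classical
  have hεinj : Function.Injective εΛ' := hΛ'.bijective.1
  -- key mixed associativity for the component maps
  have key : ∀ i h k j (y : LL i h) (c : M h k) (x : NN k j),
      α' i k j (γ i h k y c) x = α' i h j y (β h k j c x) := by
    intro i h k j y c x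
    rcases eq_or_ne t i with hi | hi
    · subst hi
      rcases eq_or_ne t j with hj | hj
      · subst hj
        have main := (re.lp_tensor h).homExt
          (AddMonoidHom.mk'
            (fun y => (fun x => α' t k t (γ t h k y c) x : NN k t → M' t t))
            (fun a b => by
              funext x
              show α' t k t (γ t h k (a + b) c) x = _
              rw [hγ.add_left, hα'.add_left]; rfl))
          (AddMonoidHom.mk'
            (fun y => (fun x => α' t h t y (β h k t c x) : NN k t → M' t t))
            (fun a b => by
              funext x
              show α' t h t (a + b) (β h k t c x) = _
              rw [hα'.add_left]; rfl))
          (fun l m => by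
            funext x
            show α' t k t (γ t h k (re.lp h l m) c) x
              = α' t h t (re.lp h l m) (β h k t c x)
            refine (ce.π_tensor k).homExt
              (AddMonoidHom.mk'
                (fun x => α' t k t (γ t h k (re.lp h l m) c) x)
                (fun a b => hα'.add_right t k t _ a b))
              (AddMonoidHom.mk'
                (fun x => α' t h t (re.lp h l m) (β h k t c x))
                (fun a b => by
                  show α' t h t (re.lp h l m) (β h k t c (a + b)) = _
                  rw [hβ.add_right, hα'.add_right]))
              (fun m' x₀ => ?_) x
            show α' t k t (γ t h k (re.lp h l m) c) (ce.π k m' x₀)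
              = α' t h t (re.lp h l m) (β h k t c (ce.π k m' x₀))
            rw [hγ.spec_t, hα'.spec₄, hβ.spec_t, hα'.spec₄, ctx.φ_assoc]) y
        exact congrFun main x
      · have hj' : j ≠ t := hj.symm
        obtain ⟨x₀, rfl⟩ := (ce.en k j hj').surjective x
        refine (re.lp_tensor h).homExt
          (AddMonoidHom.mk'
            (fun y => α' t k j (γ t h k y c) (ce.en k j hj' x₀))
            (fun a b => by
              show α' t k j (γ t h k (a + b) c) _ = _
              rw [hγ.add_left, hα'.add_left]))
          (AddMonoidHom.mk'
            (fun y => α' t h j y (β h k j c (ce.en k j hj' x₀)))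
            (fun a b => hα'.add_left t h j a b _))
          (fun l m => ?_) y
        show α' t k j (γ t h k (re.lp h l m) c) (ce.en k j hj' x₀)
          = α' t h j (re.lp h l m) (β h k j c (ce.en k j hj' x₀))
        rw [hγ.spec_t, hα'.spec₃ k j hj', hβ.spec_ne h k j hj', hα'.spec₃ h j hj',
          ctx.φ_assoc]
    · have hi' : i ≠ t := hi.symm
      obtain ⟨y₀, rfl⟩ := (re.el i h hi').surjective y
      rcases eq_or_ne t j with hj | hj
      · subst hj
        refine (ce.π_tensor k).homExt
          (AddMonoidHom.mk'
            (fun x => α' i k t (γ i h k (re.el i h hi' y₀) c) x)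
            (fun a b => hα'.add_right i k t _ a b))
          (AddMonoidHom.mk'
            (fun x => α' i h t (re.el i h hi' y₀) (β h k t c x))
            (fun a b => by
              show α' i h t (re.el i h hi' y₀) (β h k t c (a + b)) = _
              rw [hβ.add_right, hα'.add_right]))
          (fun m x₀ => ?_) x
        show α' i k t (γ i h k (re.el i h hi' y₀) c) (ce.π k m x₀)
          = α' i h t (re.el i h hi' y₀) (β h k t c (ce.π k m x₀))
        rw [hγ.spec_ne i h k hi', hα'.spec₂ i k hi', hβ.spec_t, hα'.spec₂ i h hi',
          ctx.φ_assoc]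
      · have hj' : j ≠ t := hj.symm
        obtain ⟨x₀, rfl⟩ := (ce.en k j hj').surjective x
        rw [hγ.spec_ne i h k hi', hα'.spec₁ i k j hi' hj', hβ.spec_ne h k j hj',
          hα'.spec₁ i h j hi' hj', ctx.φ_assoc]
  -- balancedness of |α'|
  have bal : ∀ (y : ∀ i j, LL i j) (x : ∀ i j, NN i j) (c : Λ),
      Abar' (op c • y) x = Abar' y (c • x) := by
    intro y x c
    apply hεinj
    rw [hAbar', hAbar']
    funext i j
    calc ∑ k, α' i k j ((op c • y) i k) (x k j)
        = ∑ k, ∑ h, α' i k j (γ i h k (y i h) (εΛ c h k)) (x k j) := by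
          refine Finset.sum_congr rfl fun k _ => ?_
          rw [hLsmulR]
          exact map_sum (AddMonoidHom.mk' (fun z : LL i k => α' i k j z (x k j))
            (fun a b => hα'.add_left i k j a b (x k j))) _ _
      _ = ∑ h, ∑ k, α' i h j (y i h) (β h k j (εΛ c h k) (x k j)) := by
          rw [Finset.sum_comm]
          exact Finset.sum_congr rfl fun h _ => Finset.sum_congr rfl fun k _ =>
            key i h k j (y i h) (εΛ c h k) (x k j)
      _ = ∑ h, α' i h j (y i h) ((c • x) h j) := by
          refine Finset.sum_congr rfl fun h _ => ?_
          rw [hNsmulL]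
          exact (map_sum (AddMonoidHom.mk' (fun z : NN h j => α' i h j (y i h) z)
            (fun a b => hα'.add_right i h j (y i h) a b)) _ _).symm
  refine ⟨bal, ?_⟩
  intro T _ τT hT
  have hadd1 : ∀ y y' x, Abar' (y + y') x = Abar' y x + Abar' y' x := by
    intro y y' x
    apply hεinj
    rw [hΛ'.map_add, hAbar', hAbar', hAbar']
    funext i j
    show ∑ k, α' i k j ((y + y') i k) (x k j) = _
    simp only [Pi.add_apply]
    rw [← Finset.sum_add_distrib]
    exact Finset.sum_congr rfl fun k _ => hα'.add_left i k j _ _ _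
  have hadd2 : ∀ y x x', Abar' y (x + x') = Abar' y x + Abar' y x' := by
    intro y x x'
    apply hεinj
    rw [hΛ'.map_add, hAbar', hAbar', hAbar']
    funext i j
    show ∑ k, α' i k j (y i k) ((x + x') k j) = _
    simp only [Pi.add_apply]
    rw [← Finset.sum_add_distrib]
    exact Finset.sum_congr rfl fun k _ => hα'.add_right i k j _ _ _
  obtain ⟨g, hg, -⟩ := hT.lift Λ' Abar' ⟨hadd1, hadd2, fun c y x => bal y x c⟩
  exact ⟨g, hg⟩
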